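/- Let A ∈ ℝ^{m×n}, B ∈ ℝ^{p×n}, u ∈ ℝ^m with ‖u‖ = 1, x ∈ ℝ^n, and α > 0, β > 0 with α² + β² = 1 be such that A x = α u, ‖B x‖ = β, and β² Aᵀ u = α BᵀB x. Set σ = α/β and y = (1/√2)·(u, x/β) ∈ ℝ^{m+n} (stacked vector). Let Ê, F̂ be real (m+n)×(m+n) matrices, σ̂ ∈ ℝ, and s ∈ ℝ^{m+n} with yᵀ B̂ s = 0, (Â + Ê)(y + s) = σ̂ (B̂ + F̂)(y + s), and yᵀ (B̂ + F̂)(y + s) ≠ 0. Set δ₁ = ‖s‖/‖y‖. Then χ(σ̂, σ) ≤ ( (‖x‖² + β²)(1 + δ₁) / (2β) ) · √(‖Ê‖² + ‖F̂‖²). -/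

import Mathlib

open Matrix

/-- The spectral (ℓ²-operator) norm of a real matrix. -/
noncomputable def specNorm {ι κ : Type*} [Fintype ι] [Fintype κ] [DecidableEq κ]
    (A : Matrix ι κ ℝ) : ℝ :=
  ‖LinearMap.toContinuousLinearMap (Matrix.toEuclideanLin A)‖

/-- The chordal distance between two real numbers. -/
noncomputable def chordal (a b : ℝ) : ℝ :=
  |a - b| / (Real.sqrt (1 + a ^ 2) * Real.sqrt (1 + b ^ 2))

lemma inner_eq_dot {ι : Type*} [Fintype ι] (a b : EuclideanSpace ℝ ι) :
    (inner ℝ a b : ℝ) = ⇑a ⬝ᵥ ⇑b := by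
  simp [PiLp.inner_apply, RCLike.inner_apply, dotProduct, mul_comm]

lemma specNorm_nonneg {ι κ : Type*} [Fintype ι] [Fintype κ] [DecidableEq κ]
    (M : Matrix ι κ ℝ) : 0 ≤ specNorm M := norm_nonneg _

lemma specNorm_bound {ι κ : Type*} [Fintype ι] [Fintype κ] [DecidableEq κ]
    (M : Matrix ι κ ℝ) (v : EuclideanSpace ℝ κ) :
    ‖Matrix.toEuclideanLin M v‖ ≤ specNorm M * ‖v‖ := by
  have := (LinearMap.toContinuousLinearMap (Matrix.toEuclideanLin M)).le_opNorm v
  simpa [specNorm] using this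

lemma chordal_key (σ σh e f : ℝ) (hd : 1 + f ≠ 0) (heq : σh * (1 + f) = σ + e) :
    |σh - σ| ≤ Real.sqrt (1 + σh ^ 2) * Real.sqrt (e ^ 2 + f ^ 2) := by
  rw [← Real.sqrt_mul (by positivity), ← Real.sqrt_sq_eq_abs]
  apply Real.sqrt_le_sqrt
  have h1 : (σh - σ) * (1 + f) = e - σ * f := by linear_combination heq
  have h2 : (σ + e) ^ 2 = σh ^ 2 * (1 + f) ^ 2 := by rw [← heq]; ring
  have hcs : (e - σ * f) ^ 2 ≤ (e ^ 2 + f ^ 2) * ((1 + f) ^ 2 + (σ + e) ^ 2) := by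
    nlinarith [sq_nonneg (e * (σ + e) + f * (1 + f))]
  have hp : (0 : ℝ) < (1 + f) ^ 2 := by positivity
  have hmain : (σh - σ) ^ 2 * (1 + f) ^ 2 ≤ (1 + σh ^ 2) * (e ^ 2 + f ^ 2) * (1 + f) ^ 2 := by
    calc (σh - σ) ^ 2 * (1 + f) ^ 2 = (e - σ * f) ^ 2 := by rw [← h1]; ring
      _ ≤ (e ^ 2 + f ^ 2) * ((1 + f) ^ 2 + (σ + e) ^ 2) := hcs
      _ = (1 + σh ^ 2) * (e ^ 2 + f ^ 2) * (1 + f) ^ 2 := by rw [h2]; ring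
  exact le_of_mul_le_mul_right hmain hp

set_option maxHeartbeats 1600000 in
/-- accuracy estimate for the approximate generalized singular value
recovered from a perturbed eigenpair of the first augmented pair `(Â, B̂)`. -/
theorem stmt_5 {m n p : ℕ}
    (A : Matrix (Fin m) (Fin n) ℝ) (B : Matrix (Fin p) (Fin n) ℝ)
    (u : EuclideanSpace ℝ (Fin m)) (x : EuclideanSpace ℝ (Fin n))
    (α β : ℝ) (hα : 0 < α) (hβ : 0 < β) (hαβ : α ^ 2 + β ^ 2 = 1)
    (hu : ‖u‖ = 1)
    (hAx : Matrix.toEuclideanLin A x = α • u)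
    (hBx : ‖Matrix.toEuclideanLin B x‖ = β)
    (hAtu : β ^ 2 • Matrix.toEuclideanLin Aᵀ u = α • Matrix.toEuclideanLin (Bᵀ * B) x)
    (σ : ℝ) (hσ : σ = α / β)
    (Ahat Bhat Ehat Fhat : Matrix (Fin m ⊕ Fin n) (Fin m ⊕ Fin n) ℝ)
    (hAhat : Ahat = Matrix.fromBlocks 0 A Aᵀ 0)
    (hBhat : Bhat = Matrix.fromBlocks 1 0 0 (Bᵀ * B))
    (y : EuclideanSpace ℝ (Fin m ⊕ Fin n))
    (hy : ∀ i, y i = (Real.sqrt 2)⁻¹ * Sum.elim (fun j => u j) (fun j => x j / β) i)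
    (σh : ℝ) (s : EuclideanSpace ℝ (Fin m ⊕ Fin n))
    (hs : (inner ℝ y (Matrix.toEuclideanLin Bhat s) : ℝ) = 0)
    (heig : Matrix.toEuclideanLin (Ahat + Ehat) (y + s)
        = σh • Matrix.toEuclideanLin (Bhat + Fhat) (y + s))
    (hden : (inner ℝ y (Matrix.toEuclideanLin (Bhat + Fhat) (y + s)) : ℝ) ≠ 0) :
    chordal σh σ ≤
      (‖x‖ ^ 2 + β ^ 2) * (1 + ‖s‖ / ‖y‖) / (2 * β) *
        Real.sqrt (specNorm Ehat ^ 2 + specNorm Fhat ^ 2) := by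
  have hβ0 : β ≠ 0 := ne_of_gt hβ
  set c0 : ℝ := (Real.sqrt 2)⁻¹ with hc0
  have hc0sq : c0 ^ 2 = 1 / 2 := by
    rw [hc0, inv_pow, Real.sq_sqrt (by norm_num : (0:ℝ) ≤ 2)]; norm_num
  -- plain-function versions of the data
  set v1 : Fin m → ℝ := fun j => c0 * u j with hv1
  set v2 : Fin n → ℝ := fun j => c0 * (x j / β) with hv2
  have hyf : ⇑y = Sum.elim v1 v2 := by
    funext i
    cases i with
    | inl j => simpa using hy (Sum.inl j)
    | inr j => simpa using hy (Sum.inr j)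
  have hAx' : A *ᵥ ⇑x = fun i => α * u i := by
    funext i
    exact congrFun (congrArg (fun v : EuclideanSpace ℝ (Fin m) => ⇑v) hAx) i
  have hAtu' : (fun i => β ^ 2 * (Aᵀ *ᵥ ⇑u) i) = fun i => α * ((Bᵀ * B) *ᵥ ⇑x) i := by
    funext i
    exact congrFun (congrArg (fun v : EuclideanSpace ℝ (Fin n) => ⇑v) hAtu) i
  have hu2 : ⇑u ⬝ᵥ ⇑u = 1 := by
    have := real_inner_self_eq_norm_sq u
    rw [inner_eq_dot] at this
    rw [this, hu]; norm_num
  have hx2 : ⇑x ⬝ᵥ ⇑x = ‖x‖ ^ 2 := by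
    have := real_inner_self_eq_norm_sq x
    rw [inner_eq_dot] at this
    rw [this]
  have hBx2 : ⇑x ⬝ᵥ ((Bᵀ * B) *ᵥ ⇑x) = β ^ 2 := by
    have h1 := real_inner_self_eq_norm_sq (Matrix.toEuclideanLin B x)
    rw [inner_eq_dot] at h1
    have h2 : ⇑(Matrix.toEuclideanLin B x) = B *ᵥ ⇑x := rfl
    rw [h2, hBx] at h1
    rw [← Matrix.mulVec_mulVec, Matrix.dotProduct_mulVec, Matrix.vecMul_transpose, h1]
  -- key block computations
  have hBy : Bhat *ᵥ ⇑y = Sum.elim v1 ((Bᵀ * B) *ᵥ v2) := by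
    rw [hyf, hBhat, Matrix.fromBlocks_mulVec]
    simp [Matrix.one_mulVec, Matrix.zero_mulVec]
  have hAy : Ahat *ᵥ ⇑y = fun i => σ * (Bhat *ᵥ ⇑y) i := by
    rw [hBy, hyf, hAhat, Matrix.fromBlocks_mulVec]
    simp only [Matrix.zero_mulVec, add_zero, zero_add, Sum.elim_comp_inl, Sum.elim_comp_inr]
    funext i
    cases i with
    | inl j =>
      have h0 : (A *ᵥ v2) j = (c0 / β) * (A *ᵥ ⇑x) j := by
        simp only [hv2, Matrix.mulVec, dotProduct]
        rw [Finset.mul_sum]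
        congr 1; funext k; ring
      have h1 : (A *ᵥ ⇑x) j = α * u j := congrFun hAx' j
      simp only [Sum.elim_inl, h0, h1, hv1]
      rw [hσ]; field_simp
    | inr j =>
      have h1 : (Aᵀ *ᵥ v1) j = c0 * (Aᵀ *ᵥ ⇑u) j := by
        simp only [hv1, Matrix.mulVec, dotProduct]
        rw [Finset.mul_sum]
        congr 1; funext k; ring
      have h2 : ((Bᵀ * B) *ᵥ v2) j = (c0 / β) * ((Bᵀ * B) *ᵥ ⇑x) j := by
        simp only [hv2, Matrix.mulVec, dotProduct]
        rw [Finset.mul_sum]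
        congr 1; funext k; ring
      have h3 : β ^ 2 * (Aᵀ *ᵥ ⇑u) j = α * ((Bᵀ * B) *ᵥ ⇑x) j := congrFun hAtu' j
      simp only [Sum.elim_inr, h1, h2]
      rw [hσ]
      field_simp
      linear_combination c0 * h3
  -- symmetry facts
  have hsymA : Ahatᵀ = Ahat := by rw [hAhat]; simp [Matrix.fromBlocks_transpose]
  have hsymB : Bhatᵀ = Bhat := by
    rw [hBhat]; simp [Matrix.fromBlocks_transpose, Matrix.transpose_mul]
  -- the inner product yᵀ B̂ y = 1
  have hc : ⇑y ⬝ᵥ (Bhat *ᵥ ⇑y) = 1 := by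
    rw [hBy, hyf, sumElim_dotProduct_sumElim]
    have e1 : v1 ⬝ᵥ v1 = c0 ^ 2 * (⇑u ⬝ᵥ ⇑u) := by
      simp only [hv1, dotProduct]
      rw [Finset.mul_sum]; congr 1; funext k; ring
    have e2 : v2 ⬝ᵥ ((Bᵀ * B) *ᵥ v2) = (c0 / β) ^ 2 * (⇑x ⬝ᵥ ((Bᵀ * B) *ᵥ ⇑x)) := by
      have h2 : ((Bᵀ * B) *ᵥ v2) = fun j => (c0 / β) * ((Bᵀ * B) *ᵥ ⇑x) j := by
        funext j
        simp only [hv2, Matrix.mulVec, dotProduct]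
        rw [Finset.mul_sum]
        congr 1; funext k; ring
      rw [h2]
      simp only [hv2, dotProduct]
      rw [Finset.mul_sum]; congr 1; funext k; ring
    rw [e1, e2, hu2, hBx2, div_pow, hc0sq]
    field_simp
    ring
  -- norm of y
  have hynorm : ‖y‖ ^ 2 = (‖x‖ ^ 2 + β ^ 2) / (2 * β ^ 2) := by
    have h1 := real_inner_self_eq_norm_sq y
    rw [inner_eq_dot, hyf, sumElim_dotProduct_sumElim] at h1
    have e1 : v1 ⬝ᵥ v1 = c0 ^ 2 * (⇑u ⬝ᵥ ⇑u) := by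
      simp only [hv1, dotProduct]
      rw [Finset.mul_sum]; congr 1; funext k; ring
    have e2 : v2 ⬝ᵥ v2 = (c0 / β) ^ 2 * (⇑x ⬝ᵥ ⇑x) := by
      simp only [hv2, dotProduct]
      rw [Finset.mul_sum]; congr 1; funext k; ring
    rw [e1, e2, hu2, hx2, div_pow, hc0sq] at h1
    rw [← h1]
    field_simp
    ring
  have hy0 : 0 < ‖y‖ := by
    have h2 : (0:ℝ) < ‖y‖ ^ 2 := by
      rw [hynorm]
      apply div_pos
      · nlinarith [sq_nonneg ‖x‖]
      · nlinarith
    nlinarith [norm_nonneg y, h2]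
  -- scalar quantities
  set w : EuclideanSpace ℝ (Fin m ⊕ Fin n) := y + s with hw
  have hwf : ⇑w = ⇑y + ⇑s := rfl
  set e : ℝ := ⇑y ⬝ᵥ (Ehat *ᵥ ⇑w) with he
  set f : ℝ := ⇑y ⬝ᵥ (Fhat *ᵥ ⇑w) with hf
  -- y ⬝ B̂ s = 0
  have hs' : ⇑y ⬝ᵥ (Bhat *ᵥ ⇑s) = 0 := by
    rw [← hs, inner_eq_dot]; rfl
  -- the eigen equation dotted with y
  have heig' : ⇑y ⬝ᵥ ((Ahat + Ehat) *ᵥ ⇑w) = σh * (⇑y ⬝ᵥ ((Bhat + Fhat) *ᵥ ⇑w)) := by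
    have h1 : ⇑(Matrix.toEuclideanLin (Ahat + Ehat) w) = (Ahat + Ehat) *ᵥ ⇑w := rfl
    have h2 : ⇑(σh • Matrix.toEuclideanLin (Bhat + Fhat) w) =
        fun i => σh * ((Bhat + Fhat) *ᵥ ⇑w) i := rfl
    have h3 := congrArg (fun v : EuclideanSpace ℝ (Fin m ⊕ Fin n) => ⇑y ⬝ᵥ ⇑v) heig
    simp only at h3
    rw [h1, h2] at h3
    rw [h3]
    simp only [dotProduct]
    rw [Finset.mul_sum]; congr 1; funext k; ring
  -- y ⬝ Â w = σ
  have hyAw : ⇑y ⬝ᵥ (Ahat *ᵥ ⇑w) = σ := by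
    have h1 : ⇑y ⬝ᵥ (Ahat *ᵥ ⇑w) = (Ahat *ᵥ ⇑y) ⬝ᵥ ⇑w := by
      rw [Matrix.dotProduct_mulVec, ← Matrix.mulVec_transpose, hsymA]
    have h2 : (Ahat *ᵥ ⇑y) ⬝ᵥ ⇑w = σ * ((Bhat *ᵥ ⇑y) ⬝ᵥ ⇑w) := by
      rw [hAy]
      simp only [dotProduct]
      rw [Finset.mul_sum]; congr 1; funext k; ring
    have h3 : (Bhat *ᵥ ⇑y) ⬝ᵥ ⇑w = ⇑y ⬝ᵥ (Bhat *ᵥ ⇑w) := by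
      rw [Matrix.dotProduct_mulVec, ← Matrix.mulVec_transpose, hsymB]
    have h4 : ⇑y ⬝ᵥ (Bhat *ᵥ ⇑w) = 1 := by
      rw [hwf, Matrix.mulVec_add, dotProduct_add, hc, hs', add_zero]
    rw [h1, h2, h3, h4, mul_one]
  -- the perturbed scalar equation
  have hfeq : ⇑y ⬝ᵥ ((Bhat + Fhat) *ᵥ ⇑w) = 1 + f := by
    rw [Matrix.add_mulVec, dotProduct_add, ← hf]
    congr 1
    rw [hwf, Matrix.mulVec_add, dotProduct_add, hc, hs', add_zero]
  have hkey : σh * (1 + f) = σ + e := by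
    have h0 : ⇑y ⬝ᵥ ((Ahat + Ehat) *ᵥ ⇑w) = σ + e := by
      rw [Matrix.add_mulVec, dotProduct_add, hyAw, ← he]
    rw [← h0, heig', hfeq]
  have hdne : (1 : ℝ) + f ≠ 0 := by
    rw [← hfeq]
    intro hcon
    apply hden
    rw [inner_eq_dot]
    exact hcon
  -- bounds on e and f
  have hbnd : ∀ (M : Matrix (Fin m ⊕ Fin n) (Fin m ⊕ Fin n) ℝ),
      |⇑y ⬝ᵥ (M *ᵥ ⇑w)| ≤ specNorm M * (‖y‖ * ‖w‖) := by
    intro M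
    have h1 : ⇑y ⬝ᵥ (M *ᵥ ⇑w) = (inner ℝ y (Matrix.toEuclideanLin M w) : ℝ) := by
      rw [inner_eq_dot]; rfl
    rw [h1]
    calc |(inner ℝ y (Matrix.toEuclideanLin M w) : ℝ)|
        ≤ ‖y‖ * ‖Matrix.toEuclideanLin M w‖ := abs_real_inner_le_norm _ _
      _ ≤ ‖y‖ * (specNorm M * ‖w‖) :=
          mul_le_mul_of_nonneg_left (specNorm_bound M w) (norm_nonneg _)
      _ = specNorm M * (‖y‖ * ‖w‖) := by ring
  have hbe : |e| ≤ specNorm Ehat * (‖y‖ * ‖w‖) := hbnd Ehat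
  have hbf : |f| ≤ specNorm Fhat * (‖y‖ * ‖w‖) := hbnd Fhat
  -- chordal bound
  have hσβ : Real.sqrt (1 + σ ^ 2) = 1 / β := by
    have : 1 + σ ^ 2 = 1 / β ^ 2 := by
      rw [hσ, div_pow]
      field_simp
      linear_combination hαβ
    rw [this, show (1:ℝ) / β ^ 2 = (1 / β) ^ 2 by rw [div_pow, one_pow],
      Real.sqrt_sq (by positivity)]
  have hstep1 : chordal σh σ ≤ β * Real.sqrt (e ^ 2 + f ^ 2) := by
    rw [chordal, hσβ]
    have hpos : 0 < Real.sqrt (1 + σh ^ 2) * (1 / β) :=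
      mul_pos (Real.sqrt_pos.mpr (by positivity)) (by positivity)
    rw [div_le_iff₀ hpos]
    calc |σh - σ| ≤ Real.sqrt (1 + σh ^ 2) * Real.sqrt (e ^ 2 + f ^ 2) :=
          chordal_key σ σh e f hdne hkey
      _ = β * Real.sqrt (e ^ 2 + f ^ 2) * (Real.sqrt (1 + σh ^ 2) * (1 / β)) := by
          field_simp
  set N : ℝ := Real.sqrt (specNorm Ehat ^ 2 + specNorm Fhat ^ 2) with hN
  have hstep2 : Real.sqrt (e ^ 2 + f ^ 2) ≤ N * (‖y‖ * ‖w‖) := by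
    have h1 : e ^ 2 + f ^ 2 ≤ (specNorm Ehat ^ 2 + specNorm Fhat ^ 2) * (‖y‖ * ‖w‖) ^ 2 := by
      have he2 : e ^ 2 ≤ (specNorm Ehat * (‖y‖ * ‖w‖)) ^ 2 := by
        rw [← sq_abs e]
        exact pow_le_pow_left₀ (abs_nonneg _) hbe 2
      have hf2 : f ^ 2 ≤ (specNorm Fhat * (‖y‖ * ‖w‖)) ^ 2 := by
        rw [← sq_abs f]
        exact pow_le_pow_left₀ (abs_nonneg _) hbf 2
      nlinarith [he2, hf2]
    calc Real.sqrt (e ^ 2 + f ^ 2)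
        ≤ Real.sqrt ((specNorm Ehat ^ 2 + specNorm Fhat ^ 2) * (‖y‖ * ‖w‖) ^ 2) :=
          Real.sqrt_le_sqrt h1
      _ = N * (‖y‖ * ‖w‖) := by
          rw [Real.sqrt_mul (by positivity), Real.sqrt_sq (by positivity)]
  have hwle : ‖w‖ ≤ ‖y‖ + ‖s‖ := norm_add_le y s
  have hN0 : 0 ≤ N := Real.sqrt_nonneg _
  have hfinal : β * Real.sqrt (e ^ 2 + f ^ 2) ≤
      (‖x‖ ^ 2 + β ^ 2) * (1 + ‖s‖ / ‖y‖) / (2 * β) * N := by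
    have h1 : β * Real.sqrt (e ^ 2 + f ^ 2) ≤ β * (N * (‖y‖ * (‖y‖ + ‖s‖))) := by
      apply mul_le_mul_of_nonneg_left _ hβ.le
      calc Real.sqrt (e ^ 2 + f ^ 2) ≤ N * (‖y‖ * ‖w‖) := hstep2
        _ ≤ N * (‖y‖ * (‖y‖ + ‖s‖)) := by
            apply mul_le_mul_of_nonneg_left _ hN0
            exact mul_le_mul_of_nonneg_left hwle (norm_nonneg _)
    have h2 : β * (N * (‖y‖ * (‖y‖ + ‖s‖))) =
        (‖x‖ ^ 2 + β ^ 2) * (1 + ‖s‖ / ‖y‖) / (2 * β) * N := by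
      have hx2b : ‖x‖ ^ 2 + β ^ 2 = 2 * β ^ 2 * ‖y‖ ^ 2 := by
        rw [hynorm]; field_simp
      have hyne : ‖y‖ ≠ 0 := ne_of_gt hy0
      have h3 : 1 + ‖s‖ / ‖y‖ = (‖y‖ + ‖s‖) / ‖y‖ := by field_simp
      rw [hx2b, h3]
      field_simp
    linarith [h1, h2.le]
  linarith [hstep1, hfinal]
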